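/- Let f ∈ ℂ[z] be a polynomial of degree d > 1, let a ∈ ℂ, and let R > 0 be such that the circle {z ∈ ℂ : |z| = R} is contained in I_∞(f) \ ⋃_{n≥0} (f^n)^{-1}(C(f)∩ℂ). Then limsup_{n→∞} sup_{|z|≤R} (d^n−1)^{-1}·log|(f^n)'(z) − a| ≤ sup_{|z|=R} g_f(z) < ∞; in particular, the sequence of functions z ↦ (d^n−1)^{-1}·log|(f^n)'(z) − a| is uniformly bounded from above on {|z| ≤ R} for n large enough. -/

import Mathlib

open Polynomial MeasureTheory Filter

/-- The `n`-th iterate of a polynomial `f` (as a polynomial). -/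
noncomputable def polyIter (f : Polynomial ℂ) : ℕ → Polynomial ℂ
  | 0 => Polynomial.X
  | n + 1 => f.comp (polyIter f n)

/-- The basin of infinity `I_∞(f) = {z : |f^n(z)| → ∞}`. -/
def basinInfty (f : Polynomial ℂ) : Set ℂ :=
  {z : ℂ | Tendsto (fun n : ℕ => ‖(polyIter f n).eval z‖) atTop atTop}


lemma polyUB (p : Polynomial ℂ) (m : ℕ) (hm : p.natDegree ≤ m) :
    ∃ C : ℝ, 1 ≤ C ∧ ∀ w : ℂ, ‖p.eval w‖ ≤ C * max 1 (‖w‖) ^ m := by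
  refine ⟨max 1 (∑ i ∈ Finset.range (m+1), ‖p.coeff i‖), le_max_left _ _, fun w => ?_⟩
  have h1 : (1:ℝ) ≤ max 1 (‖w‖) := le_max_left _ _
  have hev : p.eval w = ∑ i ∈ Finset.range (m+1), p.coeff i * w ^ i :=
    p.eval_eq_sum_range' (Nat.lt_succ_of_le hm) w
  rw [hev]
  calc ‖∑ i ∈ Finset.range (m+1), p.coeff i * w ^ i‖
      ≤ ∑ i ∈ Finset.range (m+1), ‖p.coeff i * w ^ i‖ := by
        exact norm_sum_le _ _
    _ ≤ ∑ i ∈ Finset.range (m+1), ‖p.coeff i‖ * max 1 (‖w‖) ^ m := by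
        apply Finset.sum_le_sum
        intro i hi
        rw [norm_mul, norm_pow]
        apply mul_le_mul_of_nonneg_left _ (norm_nonneg _)
        calc ‖w‖ ^ i ≤ max 1 (‖w‖) ^ i :=
              pow_le_pow_left₀ (norm_nonneg _) (le_max_right _ _) i
          _ ≤ max 1 (‖w‖) ^ m :=
              pow_le_pow_right₀ h1 (Nat.lt_succ_iff.mp (Finset.mem_range.mp hi))
    _ = (∑ i ∈ Finset.range (m+1), ‖p.coeff i‖) * max 1 (‖w‖) ^ m := by
        rw [Finset.sum_mul]
    _ ≤ _ := by
        apply mul_le_mul_of_nonneg_right (le_max_right _ _) (by positivity)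

lemma polyLB (f : Polynomial ℂ) (d : ℕ) (hd : 0 < d) (hdeg : f.natDegree = d) :
    ∃ c : ℝ, 0 < c ∧ c ≤ 1 ∧ ∀ w : ℂ,
      c * max 1 (‖w‖) ^ d ≤ max 1 (‖f.eval w‖) := by
  have hf0 : f ≠ 0 := fun h => by simp [h] at hdeg; omega
  set lc := f.leadingCoeff with hlc
  have hlc0 : lc ≠ 0 := Polynomial.leadingCoeff_ne_zero.mpr hf0
  have hlcpos : 0 < ‖lc‖ := by simpa using hlc0
  set q : Polynomial ℂ := Polynomial.C lc * Polynomial.X ^ d with hq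
  have hdegq : q.degree = d := by
    rw [hq, Polynomial.degree_C_mul_X_pow d hlc0]
  have hdegf : f.degree = d := by
    rw [Polynomial.degree_eq_natDegree hf0, hdeg]
  have hsub : (f - q).degree < d := by
    have := Polynomial.degree_sub_lt (by rw [hdegq, hdegf]) hf0 ?_
    · rwa [hdegf] at this
    · rw [hq, Polynomial.leadingCoeff_C_mul_X_pow]
  have hsubnat : (f - q).natDegree ≤ d - 1 := by
    rcases eq_or_ne (f - q) 0 with h | h
    · simp [h]
    · have : (f - q).natDegree < d := by
        rw [Polynomial.natDegree_lt_iff_degree_lt h]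
        exact_mod_cast hsub
      omega
  obtain ⟨Cr, hCr1, hCr⟩ := polyUB (f - q) (d - 1) hsubnat
  set M : ℝ := max 1 (2 * Cr / ‖lc‖) with hM
  have hM1 : (1:ℝ) ≤ M := le_max_left _ _
  refine ⟨min (min 1 (‖lc‖ / 2)) (M ^ d)⁻¹, by positivity, ?_, fun w => ?_⟩
  · exact le_trans (min_le_left _ _) (min_le_left _ _)
  · have hmaxw : (1:ℝ) ≤ max 1 (‖w‖) := le_max_left _ _
    have hfev : f.eval w = lc * w ^ d + (f - q).eval w := by
      have : f = q + (f - q) := by ring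
      nth_rewrite 1 [this]
      simp [hq]
    by_cases hw : M ≤ ‖w‖
    · -- large w
      have hw1 : (1:ℝ) ≤ ‖w‖ := le_trans hM1 hw
      have hmw : max 1 (‖w‖) = ‖w‖ := max_eq_right hw1
      have hlow : ‖lc‖ * ‖w‖ ^ d - Cr * ‖w‖ ^ (d-1)
          ≤ ‖f.eval w‖ := by
        have h1 : ‖lc * w ^ d‖ - ‖(f - q).eval w‖
            ≤ ‖f.eval w‖ := by
          rw [hfev]
          have h0 := norm_add_le (lc * w ^ d + (f - q).eval w) (-((f - q).eval w))
          simp only [add_neg_cancel_right, norm_neg] at h0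
          linarith
        rw [norm_mul, norm_pow] at h1
        have h2 : ‖(f - q).eval w‖ ≤ Cr * ‖w‖ ^ (d-1) := by
          have := hCr w
          rwa [hmw] at this
        linarith
      have hkey : (‖lc‖ / 2) * ‖w‖ ^ d ≤ ‖f.eval w‖ := by
        have h3 : Cr * ‖w‖ ^ (d-1) ≤ (‖lc‖ / 2) * ‖w‖ ^ d := by
          have hwd : ‖w‖ ^ d = ‖w‖ ^ (d-1) * ‖w‖ := by
            rw [← pow_succ]; congr 1; omega
          have hge : 2 * Cr / ‖lc‖ ≤ ‖w‖ := le_trans (le_max_right _ _) hw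
          rw [div_le_iff₀ hlcpos] at hge
          have hCle : Cr ≤ ‖lc‖ / 2 * ‖w‖ := by linarith
          calc Cr * ‖w‖ ^ (d-1)
              ≤ (‖lc‖ / 2 * ‖w‖) * ‖w‖ ^ (d-1) :=
                mul_le_mul_of_nonneg_right hCle (by positivity)
            _ = ‖lc‖ / 2 * ‖w‖ ^ d := by rw [hwd]; ring
        linarith
      calc min (min 1 (‖lc‖ / 2)) (M ^ d)⁻¹ * max 1 (‖w‖) ^ d
          ≤ (‖lc‖ / 2) * ‖w‖ ^ d := by
            rw [hmw]
            apply mul_le_mul_of_nonneg_right _ (by positivity)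
            exact le_trans (min_le_left _ _) (min_le_right _ _)
        _ ≤ ‖f.eval w‖ := hkey
        _ ≤ max 1 (‖f.eval w‖) := le_max_right _ _
    · -- small w
      push_neg at hw
      have h1 : max 1 (‖w‖) ^ d ≤ M ^ d :=
        pow_le_pow_left₀ (by positivity) (max_le hM1 hw.le) d
      calc min (min 1 (‖lc‖ / 2)) (M ^ d)⁻¹ * max 1 (‖w‖) ^ d
          ≤ (M ^ d)⁻¹ * M ^ d := by
            apply mul_le_mul (min_le_right _ _) h1 (by positivity) (by positivity)
        _ = 1 := by field_simp
        _ ≤ max 1 (‖f.eval w‖) := le_max_left _ _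


/-- `log max(1,|f^k(z)|)`. -/
noncomputable def Lfun (f : Polynomial ℂ) (z : ℂ) (k : ℕ) : ℝ :=
  Real.log (max 1 (‖(polyIter f k).eval z‖))

lemma Lfun_nonneg (f : Polynomial ℂ) (z : ℂ) (k : ℕ) : 0 ≤ Lfun f z k :=
  Real.log_nonneg (le_max_left _ _)

lemma polyIter_eval_succ (f : Polynomial ℂ) (z : ℂ) (k : ℕ) :
    (polyIter f (k+1)).eval z = f.eval ((polyIter f k).eval z) := by
  simp [polyIter, Polynomial.eval_comp]

lemma Lfun_iter_ge (f : Polynomial ℂ) (d : ℕ) (c : ℝ)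
    (hrec : ∀ z k, (d:ℝ) * Lfun f z k + Real.log c ≤ Lfun f z (k+1)) (z : ℂ) (k : ℕ) :
    ∀ n : ℕ, (d:ℝ)^n * Lfun f z k + Real.log c * ∑ j ∈ Finset.range n, (d:ℝ)^j
      ≤ Lfun f z (k+n) := by
  intro n
  induction n with
  | zero => simp
  | succ n ih =>
    have h1 := hrec z (k+n)
    have h2 := mul_le_mul_of_nonneg_left ih (by positivity : (0:ℝ) ≤ (d:ℝ))
    calc (d:ℝ)^(n+1) * Lfun f z k + Real.log c * ∑ j ∈ Finset.range (n+1), (d:ℝ)^j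
        = (d:ℝ) * ((d:ℝ)^n * Lfun f z k + Real.log c * ∑ j ∈ Finset.range n, (d:ℝ)^j)
            + Real.log c := by rw [geom_sum_succ]; ring
      _ ≤ (d:ℝ) * Lfun f z (k+n) + Real.log c := by linarith
      _ ≤ Lfun f z (k+(n+1)) := by rw [← add_assoc]; exact h1

lemma Lfun_iter_le (f : Polynomial ℂ) (d : ℕ) (A : ℝ)
    (hrec : ∀ z k, Lfun f z (k+1) ≤ (d:ℝ) * Lfun f z k + Real.log A) (z : ℂ) :
    ∀ n : ℕ, Lfun f z n
      ≤ (d:ℝ)^n * Lfun f z 0 + Real.log A * ∑ j ∈ Finset.range n, (d:ℝ)^j := by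
  intro n
  induction n with
  | zero => simp
  | succ n ih =>
    have h1 := hrec z n
    have h2 := mul_le_mul_of_nonneg_left ih (by positivity : (0:ℝ) ≤ (d:ℝ))
    calc Lfun f z (n+1) ≤ (d:ℝ) * Lfun f z n + Real.log A := h1
      _ ≤ (d:ℝ) * ((d:ℝ)^n * Lfun f z 0 + Real.log A * ∑ j ∈ Finset.range n, (d:ℝ)^j)
            + Real.log A := by linarith
      _ = (d:ℝ)^(n+1) * Lfun f z 0 + Real.log A * ∑ j ∈ Finset.range (n+1), (d:ℝ)^j := by
            rw [geom_sum_succ]; ring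

theorem stmt13 (f : Polynomial ℂ) (d : ℕ) (hd : 1 < d) (hdeg : f.natDegree = d)
    (g : ℂ → ℝ)
    (hg : ∀ z : ℂ, Tendsto
      (fun n : ℕ => Real.log (max 1 (‖(polyIter f n).eval z‖)) / (d : ℝ) ^ n)
      atTop (nhds (g z)))
    (a : ℂ) (R : ℝ) (hR : 0 < R)
    (hcircle : ∀ z : ℂ, ‖z‖ = R →
      z ∈ basinInfty f \
        ⋃ n : ℕ, {w : ℂ | (Polynomial.derivative f).eval ((polyIter f n).eval w) = 0}) :
    (∀ ε : ℝ, 0 < ε → ∃ N : ℕ, ∀ n : ℕ, N ≤ n → ∀ z : ℂ, ‖z‖ ≤ R →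
      Real.log (‖(Polynomial.derivative (polyIter f n)).eval z - a‖) /
          ((d : ℝ) ^ n - 1) ≤
        sSup (g '' {w : ℂ | ‖w‖ = R}) + ε) ∧
    (∃ M : ℝ, ∃ N : ℕ, ∀ n : ℕ, N ≤ n → ∀ z : ℂ, ‖z‖ ≤ R →
      Real.log (‖(Polynomial.derivative (polyIter f n)).eval z - a‖) /
          ((d : ℝ) ^ n - 1) ≤ M) := by
  have hd1 : (1:ℝ) < (d:ℝ) := by exact_mod_cast hd
  have hdpos : (0:ℝ) < (d:ℝ) - 1 := by linarith
  -- constants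
  obtain ⟨A, hA1, hA⟩ := polyUB f d hdeg.le
  obtain ⟨C, hC1, hC⟩ := polyUB (Polynomial.derivative f) (d-1)
    (le_trans (Polynomial.natDegree_derivative_le f) (by omega))
  obtain ⟨c, hc0, hc1, hc⟩ := polyLB f d (by omega) hdeg
  have hlogc : Real.log c ≤ 0 := Real.log_nonpos hc0.le hc1
  have hlogA : 0 ≤ Real.log A := Real.log_nonneg hA1
  have hlogC : 0 ≤ Real.log C := Real.log_nonneg hC1
  set B : ℝ := -Real.log c / ((d:ℝ) - 1) with hB
  have hB0 : 0 ≤ B := div_nonneg (by linarith) hdpos.le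
  -- recurrences
  have hrecLB : ∀ z k, (d:ℝ) * Lfun f z k + Real.log c ≤ Lfun f z (k+1) := by
    intro z k
    have h1 := hc ((polyIter f k).eval z)
    have h2 : Real.log (c * max 1 (‖(polyIter f k).eval z‖) ^ d)
        ≤ Real.log (max 1 (‖f.eval ((polyIter f k).eval z)‖)) :=
      Real.log_le_log (by positivity) h1
    rw [Real.log_mul (ne_of_gt hc0) (by positivity), Real.log_pow] at h2
    unfold Lfun
    rw [polyIter_eval_succ]
    linarith [h2]
  have hrecUB : ∀ z k, Lfun f z (k+1) ≤ (d:ℝ) * Lfun f z k + Real.log A := by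
    intro z k
    have h1 := hA ((polyIter f k).eval z)
    set m1 := max 1 (‖(polyIter f k).eval z‖) with hm1
    have hm1ge : (1:ℝ) ≤ m1 := le_max_left _ _
    have h2 : max 1 (‖f.eval ((polyIter f k).eval z)‖) ≤ A * m1 ^ d := by
      apply max_le _ h1
      calc (1:ℝ) ≤ A := hA1
        _ ≤ A * m1 ^ d := le_mul_of_one_le_right (by linarith) (one_le_pow₀ hm1ge)
    have h3 : Real.log (max 1 (‖f.eval ((polyIter f k).eval z)‖))
        ≤ Real.log (A * m1 ^ d) := Real.log_le_log (by positivity) h2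
    rw [Real.log_mul (by positivity) (by positivity), Real.log_pow] at h3
    unfold Lfun
    rw [polyIter_eval_succ]
    linarith
  -- g bounds
  have hg0 : ∀ z, 0 ≤ g z := by
    intro z
    refine ge_of_tendsto (hg z) (Eventually.of_forall fun n => ?_)
    exact div_nonneg (Real.log_nonneg (le_max_left _ _)) (by positivity)
  have hkey1 : ∀ z k, Lfun f z k ≤ (d:ℝ)^k * g z + B := by
    intro z k
    have hstep : (Lfun f z k - B) / (d:ℝ)^k ≤ g z := by
      refine ge_of_tendsto (hg z) ?_
      filter_upwards [eventually_ge_atTop k] with n hn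
      obtain ⟨m, rfl⟩ := Nat.exists_eq_add_of_le hn
      have h1 := Lfun_iter_ge f d c hrecLB z k m
      have hsum : ∑ j ∈ Finset.range m, (d:ℝ)^j ≤ (d:ℝ)^m / ((d:ℝ) - 1) := by
        rw [le_div_iff₀ hdpos]
        have := geom_sum_mul ((d:ℝ)) m
        rw [this]
        linarith [pow_pos (by linarith : (0:ℝ) < (d:ℝ)) m]
      have h2 : Real.log c * ((d:ℝ)^m / ((d:ℝ) - 1)) ≤ Real.log c * ∑ j ∈ Finset.range m, (d:ℝ)^j :=
        mul_le_mul_of_nonpos_left hsum hlogc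
      have h3 : (d:ℝ)^m * (Lfun f z k - B) ≤ Lfun f z (k+m) := by
        have : (d:ℝ)^m * (Lfun f z k - B)
            = (d:ℝ)^m * Lfun f z k + Real.log c * ((d:ℝ)^m / ((d:ℝ) - 1)) := by
          rw [hB]; field_simp; ring
        linarith
      have hpow : (0:ℝ) < (d:ℝ)^(k+m) := by positivity
      show (Lfun f z k - B) / (d:ℝ)^k ≤ Lfun f z (k+m) / (d:ℝ)^(k+m)
      rw [div_le_div_iff₀ (by positivity) hpow]
      calc (Lfun f z k - B) * (d:ℝ)^(k+m) = ((d:ℝ)^m * (Lfun f z k - B)) * (d:ℝ)^k := by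
            rw [pow_add]; ring
        _ ≤ Lfun f z (k+m) * (d:ℝ)^k :=
            mul_le_mul_of_nonneg_right h3 (by positivity)
    have hpk : (0:ℝ) < (d:ℝ)^k := by positivity
    rw [div_le_iff₀ hpk] at hstep
    linarith [hstep]
  have hkey3 : ∀ z, g z ≤ Lfun f z 0 + Real.log A / ((d:ℝ) - 1) := by
    intro z
    refine le_of_tendsto' (hg z) fun n => ?_
    have h1 := Lfun_iter_le f d A hrecUB z n
    have hsum : ∑ j ∈ Finset.range n, (d:ℝ)^j ≤ (d:ℝ)^n / ((d:ℝ) - 1) := by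
      rw [le_div_iff₀ hdpos]
      have := geom_sum_mul ((d:ℝ)) n
      rw [this]
      linarith [pow_pos (by linarith : (0:ℝ) < (d:ℝ)) n]
    have h2 : Real.log A * ∑ j ∈ Finset.range n, (d:ℝ)^j
        ≤ Real.log A * ((d:ℝ)^n / ((d:ℝ) - 1)) := mul_le_mul_of_nonneg_left hsum hlogA
    have hpow : (0:ℝ) < (d:ℝ)^n := by positivity
    rw [div_le_iff₀ hpow]
    have : (Lfun f z 0 + Real.log A / ((d:ℝ) - 1)) * (d:ℝ)^n
        = (d:ℝ)^n * Lfun f z 0 + Real.log A * ((d:ℝ)^n / ((d:ℝ) - 1)) := by ring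
    rw [this]
    show Lfun f z n ≤ _
    linarith
  -- derivative bound
  have hKder : ∀ z n, ‖(Polynomial.derivative (polyIter f n)).eval z‖
      ≤ Real.exp (∑ k ∈ Finset.range n, (Real.log C + ((d:ℝ)-1) * Lfun f z k)) := by
    intro z n
    induction n with
    | zero => simp [polyIter]
    | succ n ih =>
      have hder : Polynomial.derivative (polyIter f (n+1))
          = Polynomial.derivative (polyIter f n)
            * (Polynomial.derivative f).comp (polyIter f n) := by
        show Polynomial.derivative ((f).comp (polyIter f n)) = _
        rw [Polynomial.derivative_comp]
      rw [hder]
      rw [Polynomial.eval_mul, norm_mul]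
      have hfac : ‖(((Polynomial.derivative f).comp (polyIter f n))).eval z‖
          ≤ Real.exp (Real.log C + ((d:ℝ)-1) * Lfun f z n) := by
        rw [Polynomial.eval_comp]
        set w := (polyIter f n).eval z with hw
        have h1 := hC w
        have hm1 : (0:ℝ) < max 1 (‖w‖) := by positivity
        have h2 : C * max 1 (‖w‖) ^ (d-1)
            = Real.exp (Real.log C + ((d:ℝ)-1) * Lfun f z n) := by
          have hcast : ((d - 1 : ℕ) : ℝ) = (d:ℝ) - 1 := by
            rw [Nat.cast_sub (by omega : 1 ≤ d)]; simp
          rw [Real.exp_add, Real.exp_log (by positivity : (0:ℝ) < C)]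
          congr 1
          unfold Lfun
          rw [← hw, ← hcast, ← Real.log_pow, Real.exp_log (by positivity)]
        rw [← h2]
        exact h1
      calc ‖(Polynomial.derivative (polyIter f n)).eval z‖
            * ‖(((Polynomial.derivative f).comp (polyIter f n))).eval z‖
          ≤ Real.exp (∑ k ∈ Finset.range n, (Real.log C + ((d:ℝ)-1) * Lfun f z k))
            * Real.exp (Real.log C + ((d:ℝ)-1) * Lfun f z n) := by
            apply mul_le_mul ih hfac (norm_nonneg _) (Real.exp_nonneg _)
        _ = Real.exp (∑ k ∈ Finset.range (n+1), (Real.log C + ((d:ℝ)-1) * Lfun f z k)) := by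
            rw [← Real.exp_add, Finset.sum_range_succ]
  -- sup of g on the circle
  set G : ℝ := sSup (g '' {w : ℂ | ‖w‖ = R}) with hG
  have hbdd : BddAbove (g '' {w : ℂ | ‖w‖ = R}) := by
    refine ⟨Real.log (max 1 R) + Real.log A / ((d:ℝ) - 1), ?_⟩
    rintro _ ⟨w, hw, rfl⟩
    have h1 := hkey3 w
    have hw' : ‖w‖ = R := hw
    have h2 : Lfun f w 0 = Real.log (max 1 R) := by
      unfold Lfun
      simp [polyIter, hw']
    rw [h2] at h1
    exact h1
  have hGmem : ∀ w : ℂ, ‖w‖ = R → g w ≤ G :=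
    fun w hw => le_csSup hbdd ⟨w, hw, rfl⟩
  have hRmem : ‖(R:ℂ)‖ = R := by
    rw [Complex.norm_real, Real.norm_eq_abs, abs_of_pos hR]
  have hG0 : 0 ≤ G := le_trans (hg0 (R:ℂ)) (hGmem _ hRmem)
  set K : ℝ := Real.log C + ((d:ℝ) - 1) * B with hK
  have hK0 : 0 ≤ K := by
    have : 0 ≤ ((d:ℝ) - 1) * B := mul_nonneg hdpos.le hB0
    rw [hK]; linarith
  set c0 : ℝ := Real.log (1 + ‖a‖) with hc0def
  have hc00 : 0 ≤ c0 := Real.log_nonneg (by linarith [norm_nonneg a])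
  set T : ℕ → ℝ := fun n => ((d:ℝ)^n - 1) * G + (n:ℝ) * K + c0 with hT
  have hpow1 : ∀ n : ℕ, (1:ℝ) ≤ (d:ℝ)^n := fun n => one_le_pow₀ (by linarith)
  have hT0 : ∀ n, 0 ≤ T n := by
    intro n
    have h1 : 0 ≤ ((d:ℝ)^n - 1) * G := mul_nonneg (by linarith [hpow1 n]) hG0
    have h2 : 0 ≤ (n:ℝ) * K := mul_nonneg (Nat.cast_nonneg n) hK0
    rw [hT]; dsimp only; linarith
  -- sum bound
  have hsumB : ∀ (z : ℂ) (n : ℕ),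
      ∑ k ∈ Finset.range n, (Real.log C + ((d:ℝ)-1) * Lfun f z k)
      ≤ (n:ℝ) * K + ((d:ℝ)^n - 1) * g z := by
    intro z n
    have h1 : ∑ k ∈ Finset.range n, (Real.log C + ((d:ℝ)-1) * Lfun f z k)
        ≤ ∑ k ∈ Finset.range n, (Real.log C + ((d:ℝ)-1) * ((d:ℝ)^k * g z + B)) := by
      apply Finset.sum_le_sum
      intro k _
      have := mul_le_mul_of_nonneg_left (hkey1 z k) hdpos.le
      linarith
    have h2 : ∑ k ∈ Finset.range n, (Real.log C + ((d:ℝ)-1) * ((d:ℝ)^k * g z + B))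
        = (n:ℝ) * K + ((d:ℝ)-1) * g z * ∑ k ∈ Finset.range n, (d:ℝ)^k := by
      rw [Finset.sum_add_distrib, Finset.sum_const, Finset.card_range]
      rw [Finset.mul_sum]
      simp only [nsmul_eq_mul]
      rw [hK]
      have : ∀ k ∈ Finset.range n, ((d:ℝ)-1) * ((d:ℝ)^k * g z + B)
          = ((d:ℝ)-1) * B + ((d:ℝ)-1) * g z * (d:ℝ)^k := by intro k _; ring
      rw [Finset.sum_congr rfl this, Finset.sum_add_distrib, Finset.sum_const,
        Finset.card_range]
      simp only [nsmul_eq_mul]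
      ring
    have h3 : ((d:ℝ)-1) * g z * ∑ k ∈ Finset.range n, (d:ℝ)^k = ((d:ℝ)^n - 1) * g z := by
      have := geom_sum_mul ((d:ℝ)) n
      calc ((d:ℝ)-1) * g z * ∑ k ∈ Finset.range n, (d:ℝ)^k
          = ((∑ k ∈ Finset.range n, (d:ℝ)^k) * ((d:ℝ)-1)) * g z := by ring
        _ = ((d:ℝ)^n - 1) * g z := by rw [this]
    rw [h2, h3] at h1
    exact h1
  -- frontier bound
  have hfront : ∀ (n : ℕ) (w : ℂ), ‖w‖ = R →
      ‖(Polynomial.derivative (polyIter f n)).eval w - a‖ ≤ Real.exp (T n) := by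
    intro n w hw
    have h1 : ‖(Polynomial.derivative (polyIter f n)).eval w - a‖
        ≤ ‖(Polynomial.derivative (polyIter f n)).eval w‖ + ‖a‖ := by
      have := norm_add_le ((Polynomial.derivative (polyIter f n)).eval w) (-a)
      simpa [sub_eq_add_neg] using this
    have h2 := le_trans (hKder w n) (Real.exp_le_exp.mpr (hsumB w n))
    have h3 : (n:ℝ) * K + ((d:ℝ)^n - 1) * g w ≤ ((d:ℝ)^n - 1) * G + (n:ℝ) * K := by
      have := mul_le_mul_of_nonneg_left (hGmem w hw) (by linarith [hpow1 n] : (0:ℝ) ≤ (d:ℝ)^n - 1)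
      linarith
    have h4 : ‖(Polynomial.derivative (polyIter f n)).eval w‖
        ≤ Real.exp (((d:ℝ)^n - 1) * G + (n:ℝ) * K) :=
      le_trans h2 (le_trans (Real.exp_le_exp.mpr h3) le_rfl)
    have hE1 : (1:ℝ) ≤ Real.exp (((d:ℝ)^n - 1) * G + (n:ℝ) * K) := by
      apply Real.one_le_exp
      have ha : 0 ≤ ((d:ℝ)^n - 1) * G := mul_nonneg (by linarith [hpow1 n]) hG0
      have hb : 0 ≤ (n:ℝ) * K := mul_nonneg (Nat.cast_nonneg n) hK0
      linarith
    have h5 : Real.exp (((d:ℝ)^n - 1) * G + (n:ℝ) * K) + ‖a‖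
        ≤ Real.exp (((d:ℝ)^n - 1) * G + (n:ℝ) * K) * (1 + ‖a‖) := by
      have := mul_le_mul_of_nonneg_left hE1 (norm_nonneg a)
      nlinarith [norm_nonneg a]
    have h6 : Real.exp (((d:ℝ)^n - 1) * G + (n:ℝ) * K) * (1 + ‖a‖)
        = Real.exp (T n) := by
      rw [hT]
      dsimp only
      rw [Real.exp_add (((d:ℝ)^n - 1) * G + (n:ℝ) * K) c0]
      congr 1
      rw [hc0def, Real.exp_log (by linarith [norm_nonneg a])]
    linarith
  -- maximum modulus: extend to disk
  have hdisk : ∀ (n : ℕ) (z : ℂ), ‖z‖ ≤ R →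
      ‖(Polynomial.derivative (polyIter f n)).eval z - a‖ ≤ Real.exp (T n) := by
    intro n z hz
    have hdiff : Differentiable ℂ (fun w : ℂ =>
        (Polynomial.derivative (polyIter f n)).eval w - a) :=
      ((Polynomial.derivative (polyIter f n)).differentiable).sub_const a
    have hfr : ∀ w ∈ frontier (Metric.ball (0:ℂ) R),
        ‖(Polynomial.derivative (polyIter f n)).eval w - a‖ ≤ Real.exp (T n) := by
      intro w hw
      rw [frontier_ball (0:ℂ) (ne_of_gt hR)] at hw
      have hwR : ‖w‖ = R := by
        simpa [Metric.mem_sphere, Complex.dist_eq] using hw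
      exact hfront n w hwR
    have hcl : z ∈ closure (Metric.ball (0:ℂ) R) := by
      rw [closure_ball (0:ℂ) (ne_of_gt hR)]
      simpa [Metric.mem_closedBall, Complex.dist_eq] using hz
    exact Complex.norm_le_of_forall_mem_frontier_norm_le Metric.isBounded_ball
      hdiff.diffContOnCl hfr hcl
  have hlogdisk : ∀ (n : ℕ) (z : ℂ), ‖z‖ ≤ R →
      Real.log (‖(Polynomial.derivative (polyIter f n)).eval z - a‖) ≤ T n := by
    intro n z hz
    rcases eq_or_lt_of_le (norm_nonneg
      ((Polynomial.derivative (polyIter f n)).eval z - a)) with h | h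
    · rw [← h, Real.log_zero]; exact hT0 n
    · calc Real.log (‖(Polynomial.derivative (polyIter f n)).eval z - a‖)
          ≤ Real.log (Real.exp (T n)) := Real.log_le_log h (hdisk n z hz)
        _ = T n := Real.log_exp _
  -- the error term tends to zero
  have hlim : Tendsto (fun n : ℕ => ((n:ℝ) * K + c0) / ((d:ℝ)^n - 1)) atTop (nhds 0) := by
    have t1 : Tendsto (fun n : ℕ => 2*K * ((n:ℝ)^1 / (d:ℝ)^n) + 2*c0 * ((n:ℝ)^0 / (d:ℝ)^n))
        atTop (nhds (2*K * 0 + 2*c0 * 0)) :=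
      ((tendsto_pow_const_div_const_pow_of_one_lt 1 hd1).const_mul _).add
        ((tendsto_pow_const_div_const_pow_of_one_lt 0 hd1).const_mul _)
    rw [show (2*K * 0 + 2*c0 * 0 : ℝ) = 0 by ring] at t1
    apply tendsto_of_tendsto_of_tendsto_of_le_of_le' tendsto_const_nhds t1
    · filter_upwards [eventually_ge_atTop 1] with n hn
      have hnum : 0 ≤ (n:ℝ) * K + c0 := by
        have : 0 ≤ (n:ℝ) * K := mul_nonneg (Nat.cast_nonneg n) hK0
        linarith
      have hden : (0:ℝ) < (d:ℝ)^n - 1 := by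
        have : (d:ℝ)^1 ≤ (d:ℝ)^n := pow_le_pow_right₀ (by linarith) hn
        simp only [pow_one] at this
        linarith
      positivity
    · filter_upwards [eventually_ge_atTop 1] with n hn
      have hd2 : (2:ℝ) ≤ (d:ℝ)^n := by
        have h1 : (d:ℝ)^1 ≤ (d:ℝ)^n := pow_le_pow_right₀ (by linarith) hn
        have h2 : (2:ℝ) ≤ (d:ℝ) := by exact_mod_cast hd
        simp only [pow_one] at h1
        linarith
      have hhalf : (d:ℝ)^n / 2 ≤ (d:ℝ)^n - 1 := by linarith
      have hnum : 0 ≤ (n:ℝ) * K + c0 := by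
        have : 0 ≤ (n:ℝ) * K := mul_nonneg (Nat.cast_nonneg n) hK0
        linarith
      calc ((n:ℝ) * K + c0) / ((d:ℝ)^n - 1)
          ≤ ((n:ℝ) * K + c0) / ((d:ℝ)^n / 2) :=
            div_le_div_of_nonneg_left hnum (by linarith) hhalf
        _ = 2*K * ((n:ℝ)^1 / (d:ℝ)^n) + 2*c0 * ((n:ℝ)^0 / (d:ℝ)^n) := by
            have : (d:ℝ)^n ≠ 0 := by positivity
            field_simp
  -- main conclusion
  have main : ∀ ε : ℝ, 0 < ε → ∃ N : ℕ, ∀ n : ℕ, N ≤ n → ∀ z : ℂ, ‖z‖ ≤ R →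
      Real.log (‖(Polynomial.derivative (polyIter f n)).eval z - a‖) /
        ((d : ℝ) ^ n - 1) ≤ G + ε := by
    intro ε hε
    have hev : ∀ᶠ n : ℕ in atTop,
        ((n:ℝ) * K + c0) / ((d:ℝ)^n - 1) < ε := hlim.eventually (gt_mem_nhds hε)
    obtain ⟨N1, hN1⟩ := eventually_atTop.mp hev
    refine ⟨max N1 1, fun n hn z hz => ?_⟩
    have hn1 : 1 ≤ n := le_trans (le_max_right _ _) hn
    have hnN1 : N1 ≤ n := le_trans (le_max_left _ _) hn
    have hden : (0:ℝ) < (d:ℝ)^n - 1 := by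
      have : (d:ℝ)^1 ≤ (d:ℝ)^n := pow_le_pow_right₀ (by linarith) hn1
      simp only [pow_one] at this
      linarith
    have h1 : Real.log (‖(Polynomial.derivative (polyIter f n)).eval z - a‖) /
        ((d : ℝ) ^ n - 1) ≤ T n / ((d:ℝ)^n - 1) :=
      (div_le_div_iff_of_pos_right hden).mpr (hlogdisk n z hz)
    have h2 : T n / ((d:ℝ)^n - 1) = G + ((n:ℝ) * K + c0) / ((d:ℝ)^n - 1) := by
      rw [hT]
      dsimp only
      field_simp
      ring
    rw [h2] at h1
    have := hN1 n hnN1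
    linarith
  refine ⟨main, ⟨G + 1, ?_⟩⟩
  obtain ⟨N, hN⟩ := main 1 one_pos
  exact ⟨N, hN⟩
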